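/- arXiv:2408.11684 — 8 statements merged into one kernel-verified Lean document; each statement's English description precedes it below -/
import Mathlib

section
/- Let λ_1 ≥ λ_2 ≥ ⋯ ≥ λ_{3n} ≥ 0 be real numbers satisfying λ_{3n} + λ_{3n-1} ≥ λ_1. Then the 3×3 symmetric matrix Λ with diagonal (2λ_{3n}, 2λ_{3n-2}, 2λ_{3n-5}) and off-diagonal entries Λ_{12} = λ_{3n-1} − λ_1, Λ_{13} = λ_{3n-3} − λ_2, Λ_{23} = λ_{3n-4} − λ_3 is positive semidefinite. -/
private lemma hildebrand_quad (a b c p q r x y z : ℝ)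
    (ha : 0 ≤ a) (hab : a ≤ b) (hac : a ≤ c)
    (hp1 : -a ≤ p) (hp2 : p ≤ a) (hq1 : -a ≤ q) (hq2 : q ≤ a)
    (hr1 : -a ≤ r) (hr2 : r ≤ a) :
    0 ≤ 2*a*x^2 + 2*b*y^2 + 2*c*z^2 + 2*p*x*y + 2*q*x*z + 2*r*y*z := by
  nlinarith [mul_nonneg (by linarith : (0:ℝ) ≤ a + p) (sq_nonneg (x+y)),
    mul_nonneg (by linarith : (0:ℝ) ≤ a - p) (sq_nonneg (x-y)),
    mul_nonneg (by linarith : (0:ℝ) ≤ a + q) (sq_nonneg (x+z)),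
    mul_nonneg (by linarith : (0:ℝ) ≤ a - q) (sq_nonneg (x-z)),
    mul_nonneg (by linarith : (0:ℝ) ≤ a + r) (sq_nonneg (y+z)),
    mul_nonneg (by linarith : (0:ℝ) ≤ a - r) (sq_nonneg (y-z)),
    mul_nonneg (by linarith : (0:ℝ) ≤ b - a) (sq_nonneg y),
    mul_nonneg (by linarith : (0:ℝ) ≤ c - a) (sq_nonneg z)]

/-- First Hildebrand matrix for qutrit-qudit absolute PPT is PSD under
λ_{3n} + λ_{3n-1} ≥ λ_1. -/
theorem hildebrand_first_posSemidef (n : ℕ) (hn : 2 ≤ n) (lam : ℕ → ℝ)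
    (hmono : ∀ i j, 1 ≤ i → i ≤ j → j ≤ 3*n → lam j ≤ lam i)
    (hnonneg : ∀ i, 1 ≤ i → i ≤ 3*n → 0 ≤ lam i)
    (h : lam (3*n) + lam (3*n-1) ≥ lam 1) :
    (!![2*lam (3*n),            lam (3*n-1) - lam 1,  lam (3*n-3) - lam 2;
        lam (3*n-1) - lam 1,    2*lam (3*n-2),        lam (3*n-4) - lam 3;
        lam (3*n-3) - lam 2,    lam (3*n-4) - lam 3,  2*lam (3*n-5)]).PosSemidef := by
  have hN : 6 ≤ 3*n := by omega
  -- basic monotonicity facts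
  have m : ∀ i j, 1 ≤ i → i ≤ j → j ≤ 3*n → lam j ≤ lam i := hmono
  have h1 : lam (3*n) ≤ lam (3*n-2) := m _ _ (by omega) (by omega) (by omega)
  have h2 : lam (3*n) ≤ lam (3*n-5) := m _ _ (by omega) (by omega) (by omega)
  have ha : 0 ≤ lam (3*n) := hnonneg _ (by omega) (by omega)
  -- bounds on off-diagonals
  have e1 : lam 2 ≤ lam 1 := m 1 2 (by omega) (by omega) (by omega)
  have e2 : lam 3 ≤ lam 1 := m 1 3 (by omega) (by omega) (by omega)
  have e3 : lam (3*n-1) ≤ lam (3*n-3) := m _ _ (by omega) (by omega) (by omega)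
  have e4 : lam (3*n-1) ≤ lam (3*n-4) := m _ _ (by omega) (by omega) (by omega)
  have e5 : lam (3*n-3) ≤ lam 1 := m _ _ (by omega) (by omega) (by omega)
  have e6 : lam (3*n-4) ≤ lam 1 := m _ _ (by omega) (by omega) (by omega)
  have e7 : lam (3*n-1) ≤ lam 2 := m _ _ (by omega) (by omega) (by omega)
  have e8 : lam (3*n-1) ≤ lam 3 := m _ _ (by omega) (by omega) (by omega)
  have e9 : lam (3*n-1) ≤ lam 1 := m _ _ (by omega) (by omega) (by omega)
  rw [Matrix.posSemidef_iff_dotProduct_mulVec]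
  constructor
  · ext i j
    fin_cases i <;> fin_cases j <;> simp [Matrix.conjTranspose_apply]
  · intro x
    have := hildebrand_quad (lam (3*n)) (lam (3*n-2)) (lam (3*n-5))
      (lam (3*n-1) - lam 1) (lam (3*n-3) - lam 2) (lam (3*n-4) - lam 3)
      (x 0) (x 1) (x 2) ha h1 h2
      (by linarith) (by linarith) (by linarith) (by linarith) (by linarith) (by linarith)
    simp [dotProduct, Matrix.mulVec, Fin.sum_univ_three]
    nlinarith [this]
end

section
/- Let λ_1 ≥ λ_2 ≥ ⋯ ≥ λ_{3n} ≥ 0 be real numbers satisfying λ_{3n} + λ_{3n-1} ≥ λ_1. Then the 3×3 symmetric matrix Λ with diagonal (2λ_{3n}, 2λ_{3n-3}, 2λ_{3n-5}) and off-diagonal entries Λ_{12} = λ_{3n-1} − λ_1, Λ_{13} = λ_{3n-2} − λ_2, Λ_{23} = λ_{3n-4} − λ_3 is positive semidefinite. -/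
lemma offdiag_bound (d u v : ℝ) : -(|d| * (u ^ 2 + v ^ 2)) ≤ 2 * d * (u * v) := by
  rcases abs_cases d with ⟨h1, h2⟩ | ⟨h1, h2⟩ <;>
  nlinarith [sq_nonneg (u + v), sq_nonneg (u - v)]

lemma psd3 (a b c d e f : ℝ)
    (h1 : |d| + |e| ≤ a) (h2 : |d| + |f| ≤ b) (h3 : |e| + |f| ≤ c) :
    (!![a, d, e; d, b, f; e, f, c]).PosSemidef := by
  rw [Matrix.posSemidef_iff_dotProduct_mulVec]
  constructor
  · ext i j
    fin_cases i <;> fin_cases j <;> simp [Matrix.conjTranspose_apply]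
  · intro x
    have hx : dotProduct (star x) ((!![a, d, e; d, b, f; e, f, c]).mulVec x) =
        a * (x 0)^2 + b * (x 1)^2 + c * (x 2)^2
        + 2*d * (x 0 * x 1) + 2*e * (x 0 * x 2) + 2*f * (x 1 * x 2) := by
      simp [Matrix.mulVec, dotProduct, Fin.sum_univ_three]
      ring
    rw [hx]
    have k1 := offdiag_bound d (x 0) (x 1)
    have k2 := offdiag_bound e (x 0) (x 2)
    have k3 := offdiag_bound f (x 1) (x 2)
    have m1 : 0 ≤ (a - |d| - |e|) * (x 0)^2 :=
      mul_nonneg (by linarith) (sq_nonneg _)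
    have m2 : 0 ≤ (b - |d| - |f|) * (x 1)^2 :=
      mul_nonneg (by linarith) (sq_nonneg _)
    have m3 : 0 ≤ (c - |e| - |f|) * (x 2)^2 :=
      mul_nonneg (by linarith) (sq_nonneg _)
    nlinarith [k1, k2, k3, m1, m2, m3]

/-- Second Hildebrand matrix for qutrit-qudit absolute PPT is PSD under
λ_{3n} + λ_{3n-1} ≥ λ_1. -/
theorem hildebrand_second_posSemidef (n : ℕ) (hn : 2 ≤ n) (lam : ℕ → ℝ)
    (hmono : ∀ i j, 1 ≤ i → i ≤ j → j ≤ 3*n → lam j ≤ lam i)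
    (hnonneg : ∀ i, 1 ≤ i → i ≤ 3*n → 0 ≤ lam i)
    (h : lam (3*n) + lam (3*n-1) ≥ lam 1) :
    (!![2*lam (3*n),            lam (3*n-1) - lam 1,  lam (3*n-2) - lam 2;
        lam (3*n-1) - lam 1,    2*lam (3*n-3),        lam (3*n-4) - lam 3;
        lam (3*n-2) - lam 2,    lam (3*n-4) - lam 3,  2*lam (3*n-5)]).PosSemidef := by
  have e01 : lam (3*n) ≤ lam (3*n-1) := hmono _ _ (by omega) (by omega) (by omega)
  have e12 : lam (3*n-1) ≤ lam (3*n-2) := hmono _ _ (by omega) (by omega) (by omega)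
  have e23 : lam (3*n-2) ≤ lam (3*n-3) := hmono _ _ (by omega) (by omega) (by omega)
  have e34 : lam (3*n-3) ≤ lam (3*n-4) := hmono _ _ (by omega) (by omega) (by omega)
  have e45 : lam (3*n-4) ≤ lam (3*n-5) := hmono _ _ (by omega) (by omega) (by omega)
  have e5l1 : lam (3*n-5) ≤ lam 1 := hmono _ _ (by omega) (by omega) (by omega)
  have e4l2 : lam (3*n-4) ≤ lam 2 := hmono _ _ (by omega) (by omega) (by omega)
  have e3l3 : lam (3*n-3) ≤ lam 3 := hmono _ _ (by omega) (by omega) (by omega)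
  have l32 : lam 3 ≤ lam 2 := hmono _ _ (by omega) (by omega) (by omega)
  have l21 : lam 2 ≤ lam 1 := hmono _ _ (by omega) (by omega) (by omega)
  have nn0 : 0 ≤ lam (3*n) := hnonneg _ (by omega) (by omega)
  have nn3 : 0 ≤ lam 3 := hnonneg _ (by omega) (by omega)
  have hd : |lam (3*n-1) - lam 1| = lam 1 - lam (3*n-1) := by
    rw [abs_of_nonpos (by linarith)]; ring
  have he : |lam (3*n-2) - lam 2| = lam 2 - lam (3*n-2) := by
    rw [abs_of_nonpos (by linarith)]; ring
  have hf1 : |lam (3*n-4) - lam 3| ≤ lam (3*n-3) := abs_le.mpr ⟨by linarith, by linarith⟩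
  have hf2 : |lam (3*n-4) - lam 3| ≤ lam (3*n-5) := abs_le.mpr ⟨by linarith, by linarith⟩
  exact psd3 _ _ _ _ _ _ (by rw [hd, he]; linarith) (by rw [hd]; linarith)
    (by rw [he]; linarith)
end

section
/- Let λ_1 ≥ λ_2 ≥ ⋯ ≥ λ_{4n} ≥ 0 be real numbers (n ≥ 4) satisfying λ_{4n} + λ_{4n-1} + λ_{4n-2} + λ_{4n-3} ≥ λ_1 + λ_2 + λ_3. Then the 4×4 symmetric matrix Λ_1 with diagonal (2λ_{4n}, 2λ_{4n-4}, 2λ_{4n-7}, 2λ_{4n-9}) and off-diagonal entries (Λ_1)_{12} = λ_{4n-1} − λ_1, (Λ_1)_{13} = λ_{4n-2} − λ_2, (Λ_1)_{14} = λ_{4n-3} − λ_3, (Λ_1)_{23} = λ_{4n-5} − λ_4, (Λ_1)_{24} = λ_{4n-6} − λ_5, (Λ_1)_{34} = λ_{4n-8} − λ_6 is positive semidefinite. -/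
private lemma mul_bound_aux (e M x y : ℝ) (h1 : -M ≤ e) (h2 : e ≤ M) :
    0 ≤ M*x^2 + M*y^2 + 2*e*x*y := by
  nlinarith [mul_nonneg (by linarith : (0:ℝ) ≤ M - e) (sq_nonneg (x - y)),
    mul_nonneg (by linarith : (0:ℝ) ≤ M + e) (sq_nonneg (x + y))]

private lemma quad_key (a b c d p q r s t u P Q R S T U x0 x1 x2 x3 : ℝ)
    (hP : 0 ≤ P) (hQ : 0 ≤ Q) (hR : 0 ≤ R) (hS : 0 ≤ S) (hT : 0 ≤ T) (hU : 0 ≤ U)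
    (hp1 : -P ≤ p) (hp2 : p ≤ P) (hq1 : -Q ≤ q) (hq2 : q ≤ Q)
    (hr1 : -R ≤ r) (hr2 : r ≤ R) (hs1 : -S ≤ s) (hs2 : s ≤ S)
    (ht1 : -T ≤ t) (ht2 : t ≤ T) (hu1 : -U ≤ u) (hu2 : u ≤ U)
    (hSQ : S ≤ Q) (hTR : T ≤ R) (hUR : U ≤ R) (hQP : Q ≤ P) (hRP : R ≤ P)
    (hsum : P + Q + R ≤ a) (hab : a ≤ b) (hac : a ≤ c) (had : a ≤ d) (ha : 0 ≤ a) :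
    0 ≤ 2*a*x0^2 + 2*b*x1^2 + 2*c*x2^2 + 2*d*x3^2
      + 2*(p*x0*x1) + 2*(q*x0*x2) + 2*(r*x0*x3)
      + 2*(s*x1*x2) + 2*(t*x1*x3) + 2*(u*x2*x3) := by
  have A1 := mul_bound_aux p P x0 x1 hp1 hp2
  have A2 := mul_bound_aux q Q x0 x2 hq1 hq2
  have A3 := mul_bound_aux r R x0 x3 hr1 hr2
  have A4 := mul_bound_aux s S x1 x2 hs1 hs2
  have A5 := mul_bound_aux t T x1 x3 ht1 ht2
  have A6 := mul_bound_aux u U x2 x3 hu1 hu2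
  have e0 : 0 ≤ (2*a - (P + Q + R)) * x0^2 :=
    mul_nonneg (by linarith) (sq_nonneg x0)
  have e1 : 0 ≤ (2*b - (P + S + T)) * x1^2 :=
    mul_nonneg (by linarith) (sq_nonneg x1)
  have e2 : 0 ≤ (2*c - (Q + S + U)) * x2^2 :=
    mul_nonneg (by linarith) (sq_nonneg x2)
  have e3 : 0 ≤ (2*d - (R + T + U)) * x3^2 :=
    mul_nonneg (by linarith) (sq_nonneg x3)
  nlinarith [A1, A2, A3, A4, A5, A6, e0, e1, e2, e3]

/-- The matrix Λ₁ of the ququart-qudit criterion is PSD when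
λ_{4n}+λ_{4n-1}+λ_{4n-2}+λ_{4n-3} ≥ λ_1+λ_2+λ_3. -/
theorem lambda1_posSemidef (n : ℕ) (hn : 4 ≤ n) (lam : ℕ → ℝ)
    (hmono : ∀ i j, 1 ≤ i → i ≤ j → j ≤ 4*n → lam j ≤ lam i)
    (hnonneg : ∀ i, 1 ≤ i → i ≤ 4*n → 0 ≤ lam i)
    (h : lam (4*n) + lam (4*n-1) + lam (4*n-2) + lam (4*n-3) ≥ lam 1 + lam 2 + lam 3) :
    (!![2*lam (4*n),           lam (4*n-1) - lam 1,  lam (4*n-2) - lam 2,  lam (4*n-3) - lam 3;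
        lam (4*n-1) - lam 1,   2*lam (4*n-4),        lam (4*n-5) - lam 4,  lam (4*n-6) - lam 5;
        lam (4*n-2) - lam 2,   lam (4*n-5) - lam 4,  2*lam (4*n-7),        lam (4*n-8) - lam 6;
        lam (4*n-3) - lam 3,   lam (4*n-6) - lam 5,  lam (4*n-8) - lam 6,  2*lam (4*n-9)]).PosSemidef := by
  have h16 : 16 ≤ 4*n := by omega
  have m1 : lam (4*n-1) ≤ lam 1 := hmono 1 (4*n-1) (by omega) (by omega) (by omega)
  have m2 : lam (4*n-2) ≤ lam 2 := hmono 2 (4*n-2) (by omega) (by omega) (by omega)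
  have m3 : lam (4*n-3) ≤ lam 3 := hmono 3 (4*n-3) (by omega) (by omega) (by omega)
  have m4 : lam (4*n-5) ≤ lam 4 := hmono 4 (4*n-5) (by omega) (by omega) (by omega)
  have m5 : lam (4*n-6) ≤ lam 5 := hmono 5 (4*n-6) (by omega) (by omega) (by omega)
  have m6 : lam (4*n-8) ≤ lam 6 := hmono 6 (4*n-8) (by omega) (by omega) (by omega)
  have w1 : lam 2 ≤ lam 1 := hmono 1 2 (by omega) (by omega) (by omega)
  have w2 : lam 3 ≤ lam 2 := hmono 2 3 (by omega) (by omega) (by omega)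
  have w3 : lam 4 ≤ lam 2 := hmono 2 4 (by omega) (by omega) (by omega)
  have w4 : lam 5 ≤ lam 3 := hmono 3 5 (by omega) (by omega) (by omega)
  have w5 : lam 6 ≤ lam 3 := hmono 3 6 (by omega) (by omega) (by omega)
  have v1 : lam (4*n-1) ≤ lam (4*n-2) := hmono (4*n-2) (4*n-1) (by omega) (by omega) (by omega)
  have v2 : lam (4*n-2) ≤ lam (4*n-3) := hmono (4*n-3) (4*n-2) (by omega) (by omega) (by omega)
  have v3 : lam (4*n-2) ≤ lam (4*n-5) := hmono (4*n-5) (4*n-2) (by omega) (by omega) (by omega)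
  have v4 : lam (4*n-3) ≤ lam (4*n-6) := hmono (4*n-6) (4*n-3) (by omega) (by omega) (by omega)
  have v5 : lam (4*n-3) ≤ lam (4*n-8) := hmono (4*n-8) (4*n-3) (by omega) (by omega) (by omega)
  have d1 : lam (4*n) ≤ lam (4*n-4) := hmono (4*n-4) (4*n) (by omega) (by omega) (by omega)
  have d2 : lam (4*n) ≤ lam (4*n-7) := hmono (4*n-7) (4*n) (by omega) (by omega) (by omega)
  have d3 : lam (4*n) ≤ lam (4*n-9) := hmono (4*n-9) (4*n) (by omega) (by omega) (by omega)
  have d0 : 0 ≤ lam (4*n) := hnonneg (4*n) (by omega) (by omega)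
  rw [Matrix.posSemidef_iff_dotProduct_mulVec]
  constructor
  · ext i j
    fin_cases i <;> fin_cases j <;> simp [Matrix.conjTranspose_apply]
  · intro x
    have hquad := quad_key (lam (4*n)) (lam (4*n-4)) (lam (4*n-7)) (lam (4*n-9))
      (lam (4*n-1) - lam 1) (lam (4*n-2) - lam 2) (lam (4*n-3) - lam 3)
      (lam (4*n-5) - lam 4) (lam (4*n-6) - lam 5) (lam (4*n-8) - lam 6)
      (lam 1 - lam (4*n-1)) (lam 2 - lam (4*n-2)) (lam 3 - lam (4*n-3))
      (lam 4 - lam (4*n-5)) (lam 5 - lam (4*n-6)) (lam 6 - lam (4*n-8))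
      (x 0) (x 1) (x 2) (x 3)
      (by linarith) (by linarith) (by linarith) (by linarith) (by linarith) (by linarith)
      (by linarith) (by linarith) (by linarith) (by linarith) (by linarith) (by linarith)
      (by linarith) (by linarith) (by linarith) (by linarith) (by linarith) (by linarith)
      (by linarith) (by linarith) (by linarith) (by linarith) (by linarith)
      (by linarith) (by linarith) (by linarith) (by linarith) (by linarith)
    simp [dotProduct, Matrix.mulVec, Fin.sum_univ_four,
      Matrix.cons_val_zero, Matrix.cons_val_one, Matrix.head_cons,
      Matrix.cons_val_two, Matrix.tail_cons, Matrix.cons_val_three,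
      Fin.isValue, show ((3:Fin 4)) = (3:Fin 4) from rfl]
    nlinarith [hquad]
end

section
/- Let m, n be integers with 2 ≤ m ≤ n, and let λ_1 ≥ λ_2 ≥ ⋯ ≥ λ_{mn} ≥ 0 satisfy λ_{mn} + λ_{mn-1} + ⋯ + λ_{m(n-1)+1} ≥ λ_1 + λ_2 + ⋯ + λ_{m-1}. Then λ_{m(n-1)+1} / λ_{m-1} ≥ (m-1)/m whenever λ_{m-1} > 0. -/
/-- Eigenvalue distance bound: under the sum condition,
λ_{m(n-1)+1}/λ_{m-1} ≥ (m-1)/m. -/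
theorem eigenvalue_ratio_bound (m n : ℕ) (hm : 2 ≤ m) (hmn : m ≤ n) (lam : ℕ → ℝ)
    (hmono : ∀ i j, 1 ≤ i → i ≤ j → j ≤ m*n → lam j ≤ lam i)
    (hnonneg : ∀ i, 1 ≤ i → i ≤ m*n → 0 ≤ lam i)
    (hsum : ∑ j ∈ Finset.Icc (m*(n-1)+1) (m*n), lam j ≥ ∑ j ∈ Finset.Icc 1 (m-1), lam j)
    (hpos : 0 < lam (m-1)) :
    lam (m*(n-1)+1) / lam (m-1) ≥ ((m:ℝ)-1)/(m:ℝ) := by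
  have hm1 : 1 ≤ m := le_trans (by norm_num) hm
  have hn1 : 1 ≤ n := le_trans hm1 hmn
  set L := m*(n-1)+1 with hL
  have hLmn : L ≤ m*n := by
    have : m*(n-1) + m = m*n := by
      nlinarith [Nat.sub_add_cancel hn1]
    omega
  have hL1 : 1 ≤ L := by omega
  -- upper bound on last block
  have h1 : ∑ j ∈ Finset.Icc L (m*n), lam j ≤ (m : ℝ) * lam L := by
    have hcard : (Finset.Icc L (m*n)).card = m := by
      rw [Nat.card_Icc]
      have : m*(n-1) + m = m*n := by
        nlinarith [Nat.sub_add_cancel hn1]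
      omega
    calc ∑ j ∈ Finset.Icc L (m*n), lam j
        ≤ (Finset.Icc L (m*n)).card • lam L := by
          apply Finset.sum_le_card_nsmul
          intro j hj
          rw [Finset.mem_Icc] at hj
          exact hmono L j hL1 hj.1 hj.2
      _ = (m : ℝ) * lam L := by rw [hcard, nsmul_eq_mul]
  -- lower bound on first block
  have h2 : ((m : ℝ) - 1) * lam (m-1) ≤ ∑ j ∈ Finset.Icc 1 (m-1), lam j := by
    have hcard : (Finset.Icc 1 (m-1)).card = m - 1 := by
      rw [Nat.card_Icc]; omega
    have : (Finset.Icc 1 (m-1)).card • lam (m-1) ≤ ∑ j ∈ Finset.Icc 1 (m-1), lam j := by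
      apply Finset.card_nsmul_le_sum
      intro j hj
      rw [Finset.mem_Icc] at hj
      exact hmono j (m-1) hj.1 hj.2 (by nlinarith [Nat.sub_le m 1])
    rw [hcard, nsmul_eq_mul] at this
    have hcast : ((m - 1 : ℕ) : ℝ) = (m : ℝ) - 1 := by
      push_cast [Nat.cast_sub hm1]; ring
    rwa [hcast] at this
  have hmR : (0:ℝ) < m := by positivity
  rw [ge_iff_le, div_le_div_iff₀ hmR hpos]
  nlinarith
end

section
/- Let m, n be integers with 2 ≤ m ≤ n, and let λ_1 ≥ ⋯ ≥ λ_{mn} ≥ 0 with ∑_{i=1}^{mn} λ_i = 1. If λ_{mn} + λ_{mn-1} + ⋯ + λ_{m(n-1)+1} ≥ λ_1 + ⋯ + λ_{m-1}, then ((m-1)/m)^2 λ_{m-1}^2 ≤ (∑_{i=1}^{mn} λ_i^2 − λ_1^2) / (mn − 1). -/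
/-- Purity bound: ((m-1)/m)² λ_{m-1}² ≤ (tr(ρ²) - λ_1²)/(mn-1). -/
theorem purity_bound_one (m n : ℕ) (hm : 2 ≤ m) (hmn : m ≤ n) (lam : ℕ → ℝ)
    (hmono : ∀ i j, 1 ≤ i → i ≤ j → j ≤ m*n → lam j ≤ lam i)
    (hnonneg : ∀ i, 1 ≤ i → i ≤ m*n → 0 ≤ lam i)
    (hsum1 : ∑ i ∈ Finset.Icc 1 (m*n), lam i = 1)
    (hsum : ∑ j ∈ Finset.Icc (m*(n-1)+1) (m*n), lam j ≥ ∑ j ∈ Finset.Icc 1 (m-1), lam j) :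
    (((m:ℝ)-1)/(m:ℝ))^2 * (lam (m-1))^2 ≤
      ((∑ i ∈ Finset.Icc 1 (m*n), (lam i)^2) - (lam 1)^2) / ((m:ℝ)*(n:ℝ) - 1) := by
  -- setup
  obtain ⟨n', rfl⟩ : ∃ n', n = n' + 1 := ⟨n - 1, by omega⟩
  have hn' : m - 1 ≤ n' := by omega
  set k := m * n' with hk
  have hkm : m * (n' + 1) = k + m := by ring
  have hk2 : 2 ≤ k := by
    have : 1 ≤ n' := by omega
    calc 2 ≤ m := hm
    _ = m * 1 := by ring
    _ ≤ m * n' := by exact Nat.mul_le_mul_left m this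
  have hsimp : m * (n' + 1 - 1) = k := by simp [hk]
  rw [hkm] at hmono hnonneg hsum1 hsum ⊢
  rw [hsimp] at hsum
  -- index sets
  have hI1 : Finset.Icc 1 (k + m) = Finset.Ioc 0 (k + m) := by
    rw [← Finset.Icc_add_one_left_eq_Ioc]; rfl
  have hIA : Finset.Icc (k + 1) (k + m) = Finset.Ioc k (k + m) := by
    rw [← Finset.Icc_add_one_left_eq_Ioc]
  set A := Finset.Ioc k (k + m) with hA
  set B := Finset.Ioc 1 k with hB
  have hcardA : A.card = m := by simp [hA]
  have hcardB : B.card = k - 1 := by simp [hB]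
  -- split sums
  have hsplit : ∀ f : ℕ → ℝ, ∑ i ∈ Finset.Icc 1 (k + m), f i
      = f 1 + ((∑ i ∈ B, f i) + ∑ i ∈ A, f i) := by
    intro f
    rw [hI1, ← Finset.sum_Ioc_consecutive f (by omega : 0 ≤ 1) (by omega : 1 ≤ k + m),
      ← Finset.sum_Ioc_consecutive f (by omega : 1 ≤ k) (by omega : k ≤ k + m)]
    congr 1
    simp
  set L := lam (m - 1) with hL
  set T := ∑ j ∈ A, lam j with hT
  set SA := ∑ j ∈ A, (lam j)^2 with hSA
  set SB := ∑ j ∈ B, (lam j)^2 with hSB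
  have hLnn : 0 ≤ L := hnonneg (m - 1) (by omega) (by omega)
  -- step 1: (m-1) L ≤ T
  have h1 : ((m : ℝ) - 1) * L ≤ T := by
    have hle : ∑ j ∈ Finset.Icc 1 (m-1), lam j ≤ T := by
      rw [hT, ← hIA]; exact hsum
    have hge : ((m : ℝ) - 1) * L ≤ ∑ j ∈ Finset.Icc 1 (m-1), lam j := by
      have := Finset.card_nsmul_le_sum (Finset.Icc 1 (m-1)) lam L
        (fun i hi => by
          simp only [Finset.mem_Icc] at hi
          exact hmono i (m-1) hi.1 hi.2 (by omega))
      simp only [Nat.card_Icc, nsmul_eq_mul] at this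
      have hc : ((m - 1 + 1 - 1 : ℕ) : ℝ) = (m : ℝ) - 1 := by
        have h' : m - 1 + 1 - 1 = m - 1 := by omega
        rw [h', Nat.cast_sub (by omega : 1 ≤ m), Nat.cast_one]
      rw [hc] at this
      exact this
    linarith
  -- step 2: Cauchy-Schwarz
  have h2 : T ^ 2 ≤ (m : ℝ) * SA := by
    have := sq_sum_le_card_mul_sum_sq (s := A) (f := lam)
    rw [hcardA] at this
    exact_mod_cast this
  -- step 3: averaging
  set a := (lam (k+1))^2 with ha
  have hann : 0 ≤ a := sq_nonneg _
  have hSAle : SA ≤ (m : ℝ) * a := by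
    have := Finset.sum_le_card_nsmul A (fun j => (lam j)^2) a
      (fun j hj => by
        simp only [hA, Finset.mem_Ioc] at hj
        exact pow_le_pow_left₀ (hnonneg j (by omega) (by omega))
          (hmono (k+1) j (by omega) (by omega) (by omega)) 2)
    rw [hcardA, nsmul_eq_mul] at this
    exact this
  have hSBge : ((k : ℝ) - 1) * a ≤ SB := by
    have := Finset.card_nsmul_le_sum B (fun j => (lam j)^2) a
      (fun j hj => by
        simp only [hB, Finset.mem_Ioc] at hj
        exact pow_le_pow_left₀ (hnonneg (k+1) (by omega) (by omega))
          (hmono j (k+1) (by omega) (by omega) (by omega)) 2)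
    rw [hcardB, nsmul_eq_mul] at this
    have hc : ((k - 1 : ℕ) : ℝ) = (k : ℝ) - 1 := by
      push_cast [Nat.cast_sub (by omega : 1 ≤ k)]; ring
    rwa [hc] at this
  have hSA0 : 0 ≤ SA := Finset.sum_nonneg fun j _ => sq_nonneg _
  -- casts
  have hkcast : (k : ℝ) = (m : ℝ) * (n' : ℝ) := by push_cast [hk]; ring
  have hM : (2 : ℝ) ≤ (m : ℝ) := by exact_mod_cast hm
  have hc1 : (0 : ℝ) < (m : ℝ) * ((n' : ℝ) + 1) - 1 := by
    have : (2 : ℝ) ≤ (k : ℝ) := by exact_mod_cast hk2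
    nlinarith [this, hkcast, hM]
  have hk1 : (1 : ℝ) ≤ (k : ℝ) := by exact_mod_cast (by omega : 1 ≤ k)
  have h3 : ((m : ℝ) * ((n' : ℝ) + 1) - 1) * SA ≤ (m : ℝ) * (SB + SA) := by
    nlinarith [mul_le_mul_of_nonneg_left hSAle (by linarith : (0:ℝ) ≤ (k:ℝ) - 1),
      mul_le_mul_of_nonneg_left hSBge (by linarith : (0:ℝ) ≤ (m:ℝ))]
  -- assemble
  have hS2 : (∑ i ∈ Finset.Icc 1 (k + m), (lam i)^2) - (lam 1)^2 = SB + SA := by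
    rw [hsplit (fun i => (lam i)^2)]; ring
  rw [hS2]
  have hkey : ((m:ℝ)-1)^2 * L^2 * ((m : ℝ) * ((n' : ℝ) + 1) - 1) ≤ (m:ℝ)^2 * (SB + SA) := by
    have h0 : 0 ≤ ((m:ℝ)-1) * L := mul_nonneg (by linarith) hLnn
    have k1 : ((m:ℝ)-1)^2 * L^2 ≤ T^2 := by nlinarith [mul_self_le_mul_self h0 h1]
    have k2 := mul_le_mul_of_nonneg_left h2 hc1.le
    have k3 := mul_le_mul_of_nonneg_left h3 (by linarith : (0:ℝ) ≤ (m:ℝ))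
    have k4 := mul_le_mul_of_nonneg_left k1 hc1.le
    linarith [k2, k3, k4]
  have hcast : ((n' + 1 : ℕ) : ℝ) = (n' : ℝ) + 1 := by push_cast; ring
  rw [hcast, div_pow, div_mul_eq_mul_div, div_le_div_iff₀ (by positivity) hc1]
  linarith [hkey]
end

section
/- Let m, n be integers with 2 ≤ m ≤ n, and let λ_1 ≥ ⋯ ≥ λ_{mn} ≥ 0 with ∑ λ_i = 1. If λ_{mn} + λ_{mn-1} + ⋯ + λ_{m(n-1)+1} ≥ λ_1 + ⋯ + λ_{m-1}, then ∑_{i=1}^{mn} λ_i^2 ≥ (((m-1)/m)^2 (mn − 1) + 1) λ_{m-1}^2. -/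
/-- Purity bound: tr(ρ²) ≥ (((m-1)/m)² (mn-1) + 1) λ_{m-1}². -/
theorem purity_bound_two (m n : ℕ) (hm : 2 ≤ m) (hmn : m ≤ n) (lam : ℕ → ℝ)
    (hmono : ∀ i j, 1 ≤ i → i ≤ j → j ≤ m*n → lam j ≤ lam i)
    (hnonneg : ∀ i, 1 ≤ i → i ≤ m*n → 0 ≤ lam i)
    (hsum1 : ∑ i ∈ Finset.Icc 1 (m*n), lam i = 1)
    (hsum : ∑ j ∈ Finset.Icc (m*(n-1)+1) (m*n), lam j ≥ ∑ j ∈ Finset.Icc 1 (m-1), lam j) :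
    ∑ i ∈ Finset.Icc 1 (m*n), (lam i)^2 ≥
      ((((m:ℝ)-1)/(m:ℝ))^2 * ((m:ℝ)*(n:ℝ) - 1) + 1) * (lam (m-1))^2 := by
  have hn2 : 2 ≤ n := le_trans hm hmn
  have key : m * n = m * (n-1) + m := by
    have h1 : n - 1 + 1 = n := by omega
    calc m * n = m * ((n-1) + 1) := by rw [h1]
    _ = m * (n-1) + m := by ring
  have hp : 2 ≤ m * (n - 1) := by
    calc 2 = 2 * 1 := by ring
    _ ≤ m * (n - 1) := Nat.mul_le_mul hm (by omega)
  have hmN : m ≤ m * n := by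
    calc m = m * 1 := by ring
    _ ≤ m * n := Nat.mul_le_mul_left m (by omega)
  set L := lam (m-1) with hL
  have hL0 : 0 ≤ L := hnonneg (m-1) (by omega) (by omega)
  have hm0 : (0:ℝ) < m := by positivity
  have hmR : (2:ℝ) ≤ (m:ℝ) := by exact_mod_cast hm
  have hc0 : (0:ℝ) ≤ ((m:ℝ)-1)/m * L :=
    mul_nonneg (div_nonneg (by linarith) hm0.le) hL0
  -- the last block
  set S := ∑ j ∈ Finset.Icc (m*(n-1)+1) (m*n), lam j with hS
  have hcard : (Finset.Icc (m*(n-1)+1) (m*n)).card = m := by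
    rw [Nat.card_Icc]; omega
  have hS1 : ((m:ℝ) - 1) * L ≤ S := by
    have h1 : ∑ j ∈ Finset.Icc 1 (m-1), L ≤ ∑ j ∈ Finset.Icc 1 (m-1), lam j := by
      apply Finset.sum_le_sum
      intro j hj
      rw [Finset.mem_Icc] at hj
      exact hmono j (m-1) hj.1 hj.2 (by omega)
    rw [Finset.sum_const, Nat.card_Icc] at h1
    have : ((m - 1 + 1 - 1 : ℕ) : ℝ) = (m:ℝ) - 1 := by
      have h : m - 1 + 1 - 1 = m - 1 := by omega
      rw [h, Nat.cast_sub (by omega : 1 ≤ m)]; simp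
    rw [nsmul_eq_mul, this] at h1
    linarith [hsum]
  have hSm : S ≤ (m:ℝ) * lam (m*(n-1)+1) := by
    have h1 : ∑ j ∈ Finset.Icc (m*(n-1)+1) (m*n), lam j ≤
        ∑ j ∈ Finset.Icc (m*(n-1)+1) (m*n), lam (m*(n-1)+1) := by
      apply Finset.sum_le_sum
      intro j hj
      rw [Finset.mem_Icc] at hj
      exact hmono (m*(n-1)+1) j (by omega) hj.1 hj.2
    rw [Finset.sum_const, hcard, nsmul_eq_mul] at h1
    exact h1
  have hlamk : ((m:ℝ)-1)/m * L ≤ lam (m*(n-1)+1) := by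
    rw [div_mul_eq_mul_div, div_le_iff₀ hm0]
    nlinarith [hS1, hSm]
  -- split the sum
  have hsplit : ∑ i ∈ Finset.Icc 1 (m*n), (lam i)^2 =
      (lam 1)^2 + (∑ i ∈ Finset.Ioc 1 (m*(n-1)), (lam i)^2)
        + ∑ j ∈ Finset.Icc (m*(n-1)+1) (m*n), (lam j)^2 := by
    have e1 : Finset.Icc 1 (m*n) = Finset.Ioc 0 (m*n) := Finset.Icc_add_one_left_eq_Ioc 0 (m*n)
    have e2 : Finset.Icc (m*(n-1)+1) (m*n) = Finset.Ioc (m*(n-1)) (m*n) :=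
      Finset.Icc_add_one_left_eq_Ioc _ _
    rw [e1, e2,
      ← Finset.sum_Ioc_consecutive (fun i => (lam i)^2) (Nat.zero_le (m*(n-1))) (by omega),
      ← Finset.sum_Ioc_consecutive (fun i => (lam i)^2) (Nat.zero_le 1) (by omega : 1 ≤ m*(n-1))]
    have : Finset.Ioc 0 1 = {1} := rfl
    rw [this, Finset.sum_singleton]
  -- bound each piece
  have h1 : L^2 ≤ (lam 1)^2 := by
    have := hmono 1 (m-1) le_rfl (by omega) (by omega)
    nlinarith [hL0]
  have hmid : ((m * (n-1) - 1 : ℕ) : ℝ) * (((m:ℝ)-1)/m * L)^2 ≤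
      ∑ i ∈ Finset.Ioc 1 (m*(n-1)), (lam i)^2 := by
    have h2 : ∑ i ∈ Finset.Ioc 1 (m*(n-1)), (((m:ℝ)-1)/m * L)^2 ≤
        ∑ i ∈ Finset.Ioc 1 (m*(n-1)), (lam i)^2 := by
      apply Finset.sum_le_sum
      intro i hi
      rw [Finset.mem_Ioc] at hi
      have hik : lam (m*(n-1)+1) ≤ lam i := hmono i (m*(n-1)+1) (by omega) (by omega) (by omega)
      nlinarith [hlamk, hc0]
    rw [Finset.sum_const, Nat.card_Ioc, nsmul_eq_mul] at h2
    exact h2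
  have hlast : (m:ℝ) * (((m:ℝ)-1)/m * L)^2 ≤ ∑ j ∈ Finset.Icc (m*(n-1)+1) (m*n), (lam j)^2 := by
    have hcs := sq_sum_le_card_mul_sum_sq (s := Finset.Icc (m*(n-1)+1) (m*n)) (f := lam)
    rw [hcard] at hcs
    have hS2 : (((m:ℝ)-1) * L)^2 ≤ S^2 :=
      pow_le_pow_left₀ (mul_nonneg (by linarith) hL0) hS1 2
    have : (((m:ℝ)-1)*L)^2 ≤ (m:ℝ) * ∑ j ∈ Finset.Icc (m*(n-1)+1) (m*n), (lam j)^2 := by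
      calc (((m:ℝ)-1)*L)^2 ≤ S^2 := hS2
      _ ≤ (m:ℝ) * ∑ j ∈ Finset.Icc (m*(n-1)+1) (m*n), (lam j)^2 := hcs
    have expand : (m:ℝ) * (((m:ℝ)-1)/m * L)^2 = (((m:ℝ)-1)*L)^2 / m := by
      field_simp
    rw [expand, div_le_iff₀ hm0]
    linarith [this]
  -- combine
  have hcast : ((m * (n-1) - 1 : ℕ) : ℝ) = (m:ℝ) * ((n:ℝ) - 1) - 1 := by
    rw [Nat.cast_sub (by omega : 1 ≤ m * (n-1)), Nat.cast_mul, Nat.cast_sub (by omega : 1 ≤ n)]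
    push_cast; ring
  rw [hsplit]
  rw [hcast] at hmid
  have final : ((((m:ℝ)-1)/(m:ℝ))^2 * ((m:ℝ)*(n:ℝ) - 1) + 1) * L^2 =
      L^2 + ((m:ℝ) * ((n:ℝ) - 1) - 1) * (((m:ℝ)-1)/m * L)^2 + (m:ℝ) * (((m:ℝ)-1)/m * L)^2 := by
    field_simp
    ring
  linarith [h1, hmid, hlast]
end

section
/- Let λ_1 ≥ λ_2 ≥ ⋯ ≥ λ_N ≥ 0 with ∑_{i=1}^N λ_i = 1 and N ≥ 2. Then λ_1² ≤ 4(∑_{i=1}^N λ_i² − λ_1²)/(N−1) implies ∑_{i=1}^N λ_i² ≤ 4/(N+3). -/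
/-- If λ_1² ≤ 4(P - λ_1²)/(N-1) then the purity P satisfies P ≤ 4/(N+3). -/
theorem purity_le_of_maxEigenvalue_bound (N : ℕ) (hN : 2 ≤ N) (lam : ℕ → ℝ)
    (hmono : ∀ i j, 1 ≤ i → i ≤ j → j ≤ N → lam j ≤ lam i)
    (hnonneg : ∀ i, 1 ≤ i → i ≤ N → 0 ≤ lam i)
    (hsum : ∑ i ∈ Finset.Icc 1 N, lam i = 1)
    (h : (lam 1)^2 ≤ 4 * ((∑ i ∈ Finset.Icc 1 N, (lam i)^2) - (lam 1)^2) / ((N:ℝ) - 1)) :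
    ∑ i ∈ Finset.Icc 1 N, (lam i)^2 ≤ 4 / ((N:ℝ) + 3) := by
  set P := ∑ i ∈ Finset.Icc 1 N, (lam i)^2 with hPdef
  have hNR : (2:ℝ) ≤ (N:ℝ) := by exact_mod_cast hN
  have h1N : (1:ℕ) ∈ Finset.Icc 1 N := by
    simp only [Finset.mem_Icc]; omega
  have hl1 : 0 ≤ lam 1 := hnonneg 1 le_rfl (by omega)
  -- P ≤ lam 1
  have hPle : P ≤ lam 1 := by
    have : P ≤ ∑ i ∈ Finset.Icc 1 N, lam 1 * lam i := by
      apply Finset.sum_le_sum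
      intro i hi
      simp only [Finset.mem_Icc] at hi
      have h1 := hmono 1 i le_rfl hi.1 hi.2
      have h2 := hnonneg i hi.1 hi.2
      nlinarith
    rwa [← Finset.mul_sum, hsum, mul_one] at this
  -- lam 1 > 0
  have hcard : (Finset.Icc 1 N).card = N := by simp
  have hl1pos : 0 < lam 1 := by
    have hle : (1:ℝ) ≤ N * lam 1 := by
      calc (1:ℝ) = ∑ i ∈ Finset.Icc 1 N, lam i := hsum.symm
      _ ≤ ∑ _i ∈ Finset.Icc 1 N, lam 1 := by
          apply Finset.sum_le_sum
          intro i hi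
          simp only [Finset.mem_Icc] at hi
          exact hmono 1 i le_rfl hi.1 hi.2
      _ = N * lam 1 := by rw [Finset.sum_const, hcard]; push_cast; ring
    nlinarith
  have hPpos : 0 < P := by
    have : (lam 1)^2 ≤ P := by
      apply Finset.single_le_sum (f := fun i => (lam i)^2) _ h1N
      intro i hi
      positivity
    nlinarith
  -- (N+3) λ1² ≤ 4P
  have hN1 : (0:ℝ) < (N:ℝ) - 1 := by linarith
  have hh : ((N:ℝ) + 3) * (lam 1)^2 ≤ 4 * P := by
    have := (le_div_iff₀ hN1).mp h
    nlinarith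
  -- conclude
  rw [le_div_iff₀ (by linarith : (0:ℝ) < (N:ℝ) + 3)]
  nlinarith [mul_le_mul hPle hPle hPpos.le hl1]
end

section
/- Let λ_1 ≥ λ_2 ≥ ⋯ ≥ λ_N ≥ 0 with ∑ λ_i = 1 and N ≥ 2. Fix an integer k with 2 ≤ k ≤ N and suppose 1/k ≤ ∑ λ_i² ≤ 1/(k−1). Then λ_1 ≥ (1/k)(1 + √((k·∑λ_i² − 1)/(k−1))). -/
open Finset

lemma purity_aux (m : ℕ) : ∀ (F : Finset ℕ) (x : ℕ → ℝ) (a t : ℝ),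
    (∀ i ∈ F, 0 ≤ x i) → (∀ i ∈ F, x i ≤ a) → t ≤ a →
    ∑ i ∈ F, x i = m * a + t → ∑ i ∈ F, (x i)^2 ≤ m * a^2 + t^2 := by
  induction m with
  | zero =>
    intro F x a t h0 h1 ht hsum
    push_cast at hsum
    simp only [zero_mul, zero_add] at hsum
    have ht0 : 0 ≤ t := hsum ▸ Finset.sum_nonneg h0
    calc ∑ i ∈ F, (x i)^2 ≤ ∑ i ∈ F, t * x i := by
          apply Finset.sum_le_sum
          intro i hi
          have hle : x i ≤ t := hsum ▸ Finset.single_le_sum h0 hi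
          nlinarith [h0 i hi]
      _ = t * ∑ i ∈ F, x i := by rw [Finset.mul_sum]
      _ ≤ Nat.cast 0 * a^2 + t^2 := by rw [hsum]; push_cast; nlinarith
  | succ m ih =>
    intro F x a t h0 h1 ht hsum
    rcases F.eq_empty_or_nonempty with rfl | ⟨j0, hj0⟩
    · simp only [Finset.sum_empty] at hsum ⊢
      positivity
    have ha0 : 0 ≤ a := le_trans (h0 j0 hj0) (h1 j0 hj0)
    by_cases h : ∃ j ∈ F, t ≤ x j
    · obtain ⟨j, hj, htj⟩ := h
      have hxja : x j ≤ a := h1 j hj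
      have hsum' : ∑ i ∈ F.erase j, x i = m * a + (a + t - x j) := by
        have := Finset.add_sum_erase F x hj
        push_cast at hsum ⊢
        linarith
      have hih := ih (F.erase j) x a (a + t - x j)
        (fun i hi => h0 i (Finset.mem_of_mem_erase hi))
        (fun i hi => h1 i (Finset.mem_of_mem_erase hi))
        (by linarith) hsum'
      have hsq : ∑ i ∈ F, (x i)^2 = (x j)^2 + ∑ i ∈ F.erase j, (x i)^2 :=
        (Finset.add_sum_erase F (fun i => (x i)^2) hj).symm
      rw [hsq]
      push_cast at hih ⊢
      nlinarith [mul_nonneg (sub_nonneg.2 hxja) (sub_nonneg.2 htj)]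
    · push_neg at h
      have ht0 : 0 ≤ t := le_of_lt (lt_of_le_of_lt (h0 j0 hj0) (h j0 hj0))
      calc ∑ i ∈ F, (x i)^2 ≤ ∑ i ∈ F, t * x i := by
            apply Finset.sum_le_sum
            intro i hi
            nlinarith [h0 i hi, le_of_lt (h i hi)]
        _ = t * ∑ i ∈ F, x i := by rw [Finset.mul_sum]
        _ ≤ (m + 1 : ℕ) * a^2 + t^2 := by
            rw [hsum]; push_cast
            nlinarith [mul_nonneg (mul_nonneg (by positivity : (0:ℝ) ≤ (m:ℝ)+1) ha0) (sub_nonneg.2 ht)]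

/-- Sharp lower bound on the maximal eigenvalue in terms of the purity:
if 1/k ≤ P ≤ 1/(k-1) then λ_1 ≥ (1/k)(1 + √((kP-1)/(k-1))). -/
theorem maxEigenvalue_lower_bound (N : ℕ) (hN : 2 ≤ N) (lam : ℕ → ℝ)
    (hmono : ∀ i j, 1 ≤ i → i ≤ j → j ≤ N → lam j ≤ lam i)
    (hnonneg : ∀ i, 1 ≤ i → i ≤ N → 0 ≤ lam i)
    (hsum : ∑ i ∈ Finset.Icc 1 N, lam i = 1)
    (k : ℕ) (hk2 : 2 ≤ k) (hkN : k ≤ N)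
    (hP1 : 1 / (k:ℝ) ≤ ∑ i ∈ Finset.Icc 1 N, (lam i)^2)
    (hP2 : ∑ i ∈ Finset.Icc 1 N, (lam i)^2 ≤ 1 / ((k:ℝ) - 1)) :
    lam 1 ≥ (1 / (k:ℝ)) *
      (1 + Real.sqrt (((k:ℝ) * (∑ i ∈ Finset.Icc 1 N, (lam i)^2) - 1) / ((k:ℝ) - 1))) := by
  set P := ∑ i ∈ Finset.Icc 1 N, (lam i)^2 with hP
  set a := lam 1 with ha
  have hk1 : (1:ℝ) ≤ (k:ℝ) - 1 := by
    have : (2:ℝ) ≤ (k:ℝ) := by exact_mod_cast hk2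
    linarith
  have hkpos : (0:ℝ) < (k:ℝ) := by linarith
  have hbound : ∀ i ∈ Finset.Icc 1 N, lam i ≤ a := by
    intro i hi
    rw [Finset.mem_Icc] at hi
    exact hmono 1 i le_rfl hi.1 hi.2
  have hnn : ∀ i ∈ Finset.Icc 1 N, 0 ≤ lam i := by
    intro i hi
    rw [Finset.mem_Icc] at hi
    exact hnonneg i hi.1 hi.2
  -- P ≤ a
  have hPa : P ≤ a := by
    calc P ≤ ∑ i ∈ Finset.Icc 1 N, a * lam i := by
          apply Finset.sum_le_sum
          intro i hi
          nlinarith [hbound i hi, hnn i hi]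
      _ = a * ∑ i ∈ Finset.Icc 1 N, lam i := by rw [Finset.mul_sum]
      _ = a := by rw [hsum, mul_one]
  have hak : 1 / (k:ℝ) ≤ a := le_trans hP1 hPa
  have hka1 : 0 ≤ (k:ℝ) * a - 1 := by
    rw [div_le_iff₀ hkpos] at hak
    linarith
  -- main bound via the lemma with m = k-1, t = 1 - (k-1)a
  have hkey : P ≤ ((k:ℝ) - 1) * a^2 + (1 - ((k:ℝ) - 1) * a)^2 := by
    have := purity_aux (k - 1) (Finset.Icc 1 N) lam a (1 - ((k:ℝ) - 1) * a)
      hnn hbound (by nlinarith)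
      (by
        rw [hsum]
        have : ((k - 1 : ℕ) : ℝ) = (k:ℝ) - 1 := by
          have : (1:ℕ) ≤ k := le_trans (by norm_num) hk2
          push_cast [this]; ring
        rw [this]; ring)
    have hcast : ((k - 1 : ℕ) : ℝ) = (k:ℝ) - 1 := by
      have : (1:ℕ) ≤ k := le_trans (by norm_num) hk2
      push_cast [this]; ring
    rw [hcast] at this
    exact this
  -- hence (kP - 1)/(k-1) ≤ (ka - 1)^2
  have hdiv : ((k:ℝ) * P - 1) / ((k:ℝ) - 1) ≤ ((k:ℝ) * a - 1)^2 := by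
    rw [div_le_iff₀ (by linarith : (0:ℝ) < (k:ℝ) - 1)]
    nlinarith [hkey]
  have hsqrt : Real.sqrt (((k:ℝ) * P - 1) / ((k:ℝ) - 1)) ≤ (k:ℝ) * a - 1 := by
    have := Real.sqrt_le_sqrt hdiv
    rwa [Real.sqrt_sq hka1] at this
  rw [ge_iff_le]
  calc (1 / (k:ℝ)) * (1 + Real.sqrt (((k:ℝ) * P - 1) / ((k:ℝ) - 1)))
      ≤ (1 / (k:ℝ)) * ((k:ℝ) * a) := by
        apply mul_le_mul_of_nonneg_left (by linarith) (by positivity)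
    _ = a := by field_simp
end
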